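/- arXiv:1308.6473 — 3 statements merged into one kernel-verified Lean document; each statement's English description precedes it below -/
import Mathlib

section
/- For all a,b,c,i,j,k ∈ ℕ, the 3d R matrix elements satisfy the symmetry (q²;q²)_a (q²;q²)_b (q²;q²)_c · R^{a,b,c}_{i,j,k} = (q²;q²)_i (q²;q²)_j (q²;q²)_k · R^{i,j,k}_{a,b,c} in ℚ(q). -/
/- Symmetry of the 3d R matrix:
`(q²)_a (q²)_b (q²)_c R^{a,b,c}_{i,j,k} = (q²)_i (q²)_j (q²)_k R^{i,j,k}_{a,b,c}` in ℚ(q). -/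

noncomputable section
open Finset

/-- `(x;p)_m = ∏_{j=1}^m (1 - x p^{j-1})`. -/
def poch {K : Type} [Field K] (x p : K) (m : ℕ) : K := ∏ j ∈ range m, (1 - x * p ^ j)

/-- Gaussian binomial `binom(m,n)_p`, zero unless `0 ≤ n ≤ m`. -/
def qbinom {K : Type} [Field K] (p : K) (m n : ℕ) : K :=
  if n ≤ m then poch p p m / (poch p p n * poch p p (m - n)) else 0

/-- The 3d R matrix element `R^{a,b,c}_{i,j,k}`. -/
def R3 {K : Type} [Field K] (q : K) (a b c i j k : ℕ) : K :=
  if a + b = i + j ∧ b + c = j + k then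
    ∑ l ∈ range (b + 1),
      (-1 : K) ^ l *
        q ^ ((i : ℤ) * ((c : ℤ) - (j : ℤ)) + ((k : ℤ) + 1) * (l : ℤ)
            + ((b : ℤ) - (l : ℤ)) * ((b : ℤ) - (l : ℤ) - (k : ℤ))) *
        (poch (q ^ 2) (q ^ 2) (c + (b - l)) / poch (q ^ 2) (q ^ 2) c) *
        qbinom (q ^ 2) i (b - l) * qbinom (q ^ 2) j l
  else 0

lemma one_sub_X_pow_ne_zero (n : ℕ) (hn : n ≠ 0) :
    (1 : RatFunc ℚ) - RatFunc.X ^ n ≠ 0 := by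
  intro h
  have h' : algebraMap (Polynomial ℚ) (RatFunc ℚ) ((1 : Polynomial ℚ) - Polynomial.X ^ n)
      = algebraMap (Polynomial ℚ) (RatFunc ℚ) 0 := by
    rw [map_sub, map_one, map_pow, RatFunc.algebraMap_X, map_zero, h]
  have h2 : (1 : Polynomial ℚ) - Polynomial.X ^ n = 0 := RatFunc.algebraMap_injective ℚ h'
  have h3 := congrArg (Polynomial.eval (0 : ℚ)) h2
  simp [zero_pow hn] at h3

lemma poch_ne_zero (m : ℕ) :
    poch ((RatFunc.X : RatFunc ℚ) ^ 2) (RatFunc.X ^ 2) m ≠ 0 := by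
  unfold poch
  rw [Finset.prod_ne_zero_iff]
  intro j _
  have hX : (RatFunc.X : RatFunc ℚ) ^ 2 * (RatFunc.X ^ 2) ^ j = RatFunc.X ^ (2 * (j + 1)) := by
    rw [← pow_mul, ← pow_add]
    ring_nf
  rw [hX]
  exact one_sub_X_pow_ne_zero _ (by omega)

lemma sum_shrink {M : Type*} [AddCommMonoid M] (n m : ℕ) (hmn : m ≤ n) (f : ℕ → M)
    (h : ∀ l, m < l → l ≤ n → f l = 0) :
    ∑ l ∈ Finset.range (n + 1), f l = ∑ l ∈ Finset.range (m + 1), f l := by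
  refine (Finset.sum_subset (Finset.range_subset_range.2 (by omega)) ?_).symm
  intro l hl hl2
  simp only [Finset.mem_range] at hl hl2
  exact h l (by omega) (by omega)

theorem R3_symmetry (a b c i j k : ℕ) :
    poch ((RatFunc.X : RatFunc ℚ) ^ 2) (RatFunc.X ^ 2) a *
      poch ((RatFunc.X : RatFunc ℚ) ^ 2) (RatFunc.X ^ 2) b *
      poch ((RatFunc.X : RatFunc ℚ) ^ 2) (RatFunc.X ^ 2) c *
      R3 (RatFunc.X : RatFunc ℚ) a b c i j k =
    poch ((RatFunc.X : RatFunc ℚ) ^ 2) (RatFunc.X ^ 2) i *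
      poch ((RatFunc.X : RatFunc ℚ) ^ 2) (RatFunc.X ^ 2) j *
      poch ((RatFunc.X : RatFunc ℚ) ^ 2) (RatFunc.X ^ 2) k *
      R3 (RatFunc.X : RatFunc ℚ) i j k a b c := by
  by_cases h : a + b = i + j ∧ b + c = j + k
  · obtain ⟨h1, h2⟩ := h
    simp only [R3]
    rw [if_pos ⟨h1, h2⟩, if_pos ⟨h1.symm, h2.symm⟩, Finset.mul_sum, Finset.mul_sum]
    refine Eq.trans (sum_shrink b (min b j) (min_le_left _ _) _ ?_)
      (Eq.trans (Finset.sum_congr rfl ?_)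
        (sum_shrink j (min b j) (min_le_right _ _) _ ?_).symm)
    · intro l hl _
      have hlj : ¬ l ≤ j := by omega
      simp [qbinom, hlj]
    · intro l hl
      simp only [Finset.mem_range] at hl
      have hlb : l ≤ b := by omega
      have hlj : l ≤ j := by omega
      by_cases hbi : b - l ≤ i
      · have haj : j - l ≤ a := by omega
        have e1 : c + (b - l) = k + (j - l) := by omega
        have e2 : i - (b - l) = a - (j - l) := by omega
        have e3 : (i : ℤ) * ((c : ℤ) - (j : ℤ)) + ((k : ℤ) + 1) * (l : ℤ)
              + ((b : ℤ) - (l : ℤ)) * ((b : ℤ) - (l : ℤ) - (k : ℤ))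
            = (a : ℤ) * ((k : ℤ) - (b : ℤ)) + ((c : ℤ) + 1) * (l : ℤ)
              + ((j : ℤ) - (l : ℤ)) * ((j : ℤ) - (l : ℤ) - (c : ℤ)) := by
          have hi : (i : ℤ) = (a : ℤ) + (b : ℤ) - (j : ℤ) := by omega
          have hk : (k : ℤ) = (b : ℤ) + (c : ℤ) - (j : ℤ) := by omega
          rw [hi, hk]; ring
        simp only [qbinom, if_pos hbi, if_pos hlj, if_pos haj, if_pos hlb]
        rw [e1, e2, e3]
        have n1 := poch_ne_zero c
        have n2 := poch_ne_zero k
        have n3 := poch_ne_zero (b - l)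
        have n4 := poch_ne_zero (j - l)
        have n5 := poch_ne_zero l
        have n6 := poch_ne_zero (a - (j - l))
        field_simp
      · have haj : ¬ j - l ≤ a := by omega
        simp [qbinom, hbi, haj]
    · intro l hl _
      have hlb : ¬ l ≤ b := by omega
      simp [qbinom, hlb]
  · have h' : ¬ (i + j = a + b ∧ j + k = b + c) := fun ⟨e1, e2⟩ => h ⟨e1.symm, e2.symm⟩
    simp only [R3]
    rw [if_neg h, if_neg h', mul_zero, mul_zero]
end
end

section
/- For every d ≥ 0 and both sign choices, the vector u^{(d)}_± satisfies (Δk_0) u^{(d)}_± = q^{−4d−4} u^{(d)}_± and (Δe_0) u^{(d)}_± = 0, where Δe_0 = 1⊗e_0 + e_0⊗k_0 and Δk_0 = k_0⊗k_0 act on F⊗F (these operators are independent of the parameters x, y). -/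
/- The vectors u^{(d)}_± satisfy Δk₀ u = q^{-4d-4} u and Δe₀ u = 0. -/

noncomputable section
open Finset TensorProduct

/-- The operator on `F = ⊕_{m≥0} K|m⟩ = ℕ →₀ K` sending the basis vector `|m⟩` to `v m`. -/
def opOf {K : Type} [Field K] (v : ℕ → (ℕ →₀ K)) : Module.End K (ℕ →₀ K) :=
  Finsupp.lsum K fun m => LinearMap.toSpanSingleton K (ℕ →₀ K) (v m)

/-- `[m] = (q^m - q^{-m})/(q - q^{-1})`. -/
def qint {K : Type} [Field K] (q : K) (m : ℤ) : K := (q ^ m - q ^ (-m)) / (q - q⁻¹)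

/-- `[n]_q! = ∏_{l=1}^n [l]_q`. -/
def qfac {K : Type} [Field K] (q : K) (n : ℕ) : K := ∏ l ∈ Icc 1 n, qint q (l : ℤ)

/-- `e₀|m⟩ = -ε₀ ([2m][2m-2]/[4]²)|m-2⟩`. -/
def e0W {K : Type} [Field K] (q ε₀ : K) : Module.End K (ℕ →₀ K) :=
  opOf fun m => Finsupp.single (m - 2)
    (-(ε₀ * (qint q (2 * (m : ℤ)) * qint q (2 * (m : ℤ) - 2) / (qint q 4) ^ 2)))

/-- `f₀|m⟩ = |m+2⟩`. -/
def f0W {K : Type} [Field K] : Module.End K (ℕ →₀ K) :=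
  opOf fun m => Finsupp.single (m + 2) (1 : K)

/-- `k₀|m⟩ = ε₀ q^{-4m-2}|m⟩`. -/
def k0W {K : Type} [Field K] (q ε₀ : K) : Module.End K (ℕ →₀ K) :=
  opOf fun m => Finsupp.single m (ε₀ * q ^ (-(4 * (m : ℤ) + 2)))

/-- `k₀⁻¹|m⟩ = ε₀ q^{4m+2}|m⟩`. -/
def k0Winv {K : Type} [Field K] (q ε₀ : K) : Module.End K (ℕ →₀ K) :=
  opOf fun m => Finsupp.single m (ε₀ * q ^ (4 * (m : ℤ) + 2))

/-- `e₁|m⟩ = x|m+1⟩`. -/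
def e1W {K : Type} [Field K] (x : K) : Module.End K (ℕ →₀ K) :=
  opOf fun m => Finsupp.single (m + 1) x

/-- `f₁|m⟩ = ε₁ (-1)^m x⁻¹ ([2m]/[2])|m-1⟩`. -/
def f1W {K : Type} [Field K] (q ε₁ x : K) : Module.End K (ℕ →₀ K) :=
  opOf fun m => Finsupp.single (m - 1)
    (ε₁ * (-1 : K) ^ m * x⁻¹ * (qint q (2 * (m : ℤ)) / qint q 2))

/-- `k₁|m⟩ = ε₁ (-1)^m q^{2m+1}|m⟩`. -/
def k1W {K : Type} [Field K] (q ε₁ : K) : Module.End K (ℕ →₀ K) :=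
  opOf fun m => Finsupp.single m (ε₁ * (-1 : K) ^ m * q ^ (2 * (m : ℤ) + 1))

/-- `k₁⁻¹|m⟩ = ε₁ (-1)^m q^{-2m-1}|m⟩`. -/
def k1Winv {K : Type} [Field K] (q ε₁ : K) : Module.End K (ℕ →₀ K) :=
  opOf fun m => Finsupp.single m (ε₁ * (-1 : K) ^ m * q ^ (-(2 * (m : ℤ) + 1)))

/-- The zero of `F ⊗ F` (made explicit to help instance resolution). -/
noncomputable instance instZeroTensorFinsupp {K : Type} [Field K] :
    Zero ((ℕ →₀ K) ⊗[K] (ℕ →₀ K)) :=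
  (inferInstance : AddZeroClass ((ℕ →₀ K) ⊗[K] (ℕ →₀ K))).toZero

/-- `u^{(d)}_+ = Σ_{j=0}^d (-1)^{j(j-1)/2} q^{j(j-1)} binom(d,j)_{q⁴} |j⟩⊗|d-j⟩`. -/
def uvecP {K : Type} [Field K] (q : K) (d : ℕ) : (ℕ →₀ K) ⊗[K] (ℕ →₀ K) :=
  ∑ j ∈ range (d + 1),
    ((-1 : K) ^ (j * (j - 1) / 2) * q ^ (j * (j - 1)) * qbinom (q ^ 4) d j) •
      (Finsupp.single j (1 : K) ⊗ₜ[K] Finsupp.single (d - j) (1 : K))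

/-- `u^{(d)}_- = Σ_{j=0}^d (-1)^{j(j+1)/2} q^{j(j-1)} binom(d,j)_{q⁴} |j⟩⊗|d-j⟩`. -/
def uvecM {K : Type} [Field K] (q : K) (d : ℕ) : (ℕ →₀ K) ⊗[K] (ℕ →₀ K) :=
  ∑ j ∈ range (d + 1),
    ((-1 : K) ^ (j * (j + 1) / 2) * q ^ (j * (j - 1)) * qbinom (q ^ 4) d j) •
      (Finsupp.single j (1 : K) ⊗ₜ[K] Finsupp.single (d - j) (1 : K))

/-- `Δe₀ = 1⊗e₀ + e₀⊗k₀` (with ε₀ = 1). -/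
def De0 {K : Type} [Field K] (q : K) : Module.End K ((ℕ →₀ K) ⊗[K] (ℕ →₀ K)) :=
  TensorProduct.map LinearMap.id (e0W q 1) + TensorProduct.map (e0W q 1) (k0W q 1)

/-- `Δk₀ = k₀⊗k₀` (with ε₀ = 1). -/
def Dk0 {K : Type} [Field K] (q : K) : Module.End K ((ℕ →₀ K) ⊗[K] (ℕ →₀ K)) :=
  TensorProduct.map (k0W q 1) (k0W q 1)

/-- `Δf₀ = f₀⊗1 + k₀⁻¹⊗f₀` (with ε₀ = 1). -/
def Df0 {K : Type} [Field K] (q : K) : Module.End K ((ℕ →₀ K) ⊗[K] (ℕ →₀ K)) :=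
  TensorProduct.map f0W LinearMap.id + TensorProduct.map (k0Winv q 1) f0W

namespace UvecAux
open Polynomial
set_option linter.unusedSectionVars false

variable {K : Type} [Field K] [Algebra ℚ K] {q : K}

lemma opOf_single (v : ℕ → (ℕ →₀ K)) (m : ℕ) (c : K) :
    opOf v (Finsupp.single m c) = c • v m := by simp [opOf]

lemma q_ne_zero (hq : Transcendental ℚ q) : q ≠ 0 := fun h => hq (h ▸ isAlgebraic_zero)

lemma q_pow_ne_one (hq : Transcendental ℚ q) {n : ℕ} (hn : 0 < n) : q ^ n ≠ 1 := by
  intro h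
  exact hq ⟨X ^ n - C 1, X_pow_sub_C_ne_zero hn 1, by simp [h]⟩

lemma one_sub_p_pow_ne_zero (hq : Transcendental ℚ q) {n : ℕ} (hn : 0 < n) :
    (1 : K) - (q ^ 4) ^ n ≠ 0 := by
  rw [sub_ne_zero, ← pow_mul]
  exact fun h => q_pow_ne_one hq (by positivity) h.symm

lemma D_ne_zero (hq : Transcendental ℚ q) : q - q⁻¹ ≠ 0 := by
  intro h
  have h0 : q ≠ 0 := q_ne_zero hq
  apply q_pow_ne_one hq (n := 2) two_pos
  have hqq : q = q⁻¹ := sub_eq_zero.mp h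
  rw [pow_two]
  nth_rewrite 2 [hqq]
  exact mul_inv_cancel₀ h0

lemma qint_two_mul (hq0 : q ≠ 0) (m : ℕ) :
    qint q (2 * (m : ℤ)) = q ^ (-(2 * (m : ℤ))) * ((q ^ 4) ^ m - 1) / (q - q⁻¹) := by
  unfold qint
  congr 1
  have h1 : ((q : K) ^ 4) ^ m = q ^ ((4 * m : ℕ) : ℤ) := by
    rw [← pow_mul, zpow_natCast]
  rw [h1, mul_sub, mul_one, ← zpow_add₀ hq0]
  congr 2
  push_cast
  ring

lemma qint4_ne_zero (hq : Transcendental ℚ q) : qint q 4 ≠ 0 := by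
  have hq0 := q_ne_zero hq
  have h : qint q 4 = qint q (2 * ((2 : ℕ) : ℤ)) := by norm_num
  rw [h, qint_two_mul hq0]
  apply div_ne_zero _ (D_ne_zero hq)
  apply mul_ne_zero (zpow_ne_zero _ hq0)
  rw [sub_ne_zero, ← pow_mul]
  exact q_pow_ne_one hq (by norm_num)

lemma poch_succ (x p : K) (m : ℕ) : poch x p (m + 1) = poch x p m * (1 - x * p ^ m) :=
  Finset.prod_range_succ _ m

lemma poch_p_ne_zero (hq : Transcendental ℚ q) (n : ℕ) : poch (q ^ 4) (q ^ 4) n ≠ 0 := by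
  unfold poch
  rw [Finset.prod_ne_zero_iff]
  intro j _
  rw [show (q ^ 4) * (q ^ 4) ^ j = (q ^ 4) ^ (j + 1) by rw [pow_succ]; ring]
  exact one_sub_p_pow_ne_zero hq j.succ_pos

lemma qbinom_ne_zero (hq : Transcendental ℚ q) {d j : ℕ} (hj : j ≤ d) :
    qbinom (q ^ 4) d j ≠ 0 := by
  rw [qbinom, if_pos hj]
  exact div_ne_zero (poch_p_ne_zero hq d)
    (mul_ne_zero (poch_p_ne_zero hq j) (poch_p_ne_zero hq (d - j)))

lemma qbinom_rec (hq : Transcendental ℚ q) {d j : ℕ} (hj : j + 2 ≤ d) :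
    qbinom (q ^ 4) d (j + 2) * ((1 - (q ^ 4) ^ (j + 1)) * (1 - (q ^ 4) ^ (j + 2))) =
      qbinom (q ^ 4) d j * ((1 - (q ^ 4) ^ (d - j)) * (1 - (q ^ 4) ^ (d - j - 1))) := by
  have hP : ∀ n, poch (q ^ 4) (q ^ 4) (n + 2)
      = poch (q ^ 4) (q ^ 4) n * ((1 - (q ^ 4) ^ (n + 1)) * (1 - (q ^ 4) ^ (n + 2))) := by
    intro n
    rw [poch_succ, poch_succ, pow_succ, pow_succ]
    ring
  have h1 : d - j = (d - (j + 2)) + 2 := by omega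
  have h2 : d - (j + 2) + 1 = d - j - 1 := by omega
  rw [qbinom, qbinom, if_pos hj, if_pos (by omega : j ≤ d), h1, hP, hP, h2,
    show d - (j + 2) + 2 = d - j by omega]
  have n1 := poch_p_ne_zero hq d
  have n2 := poch_p_ne_zero hq j
  have n3 := poch_p_ne_zero hq (j + 2)
  have n4 := poch_p_ne_zero hq (d - (j + 2))
  have n5 : (1 : K) - (q ^ 4) ^ (j + 1) ≠ 0 := one_sub_p_pow_ne_zero hq (by omega)
  have n6 : (1 : K) - (q ^ 4) ^ (j + 2) ≠ 0 := one_sub_p_pow_ne_zero hq (by omega)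
  have n7 : (1 : K) - (q ^ 4) ^ (d - j) ≠ 0 := one_sub_p_pow_ne_zero hq (by omega)
  have n8 : (1 : K) - (q ^ 4) ^ (d - j - 1) ≠ 0 := one_sub_p_pow_ne_zero hq (by omega)
  field_simp


/-- The coefficient of `e₀` acting on `|m⟩` (with ε₀ = 1). -/
def Acoef (q : K) (m : ℕ) : K :=
  -((1 : K) * (qint q (2 * (m : ℤ)) * qint q (2 * (m : ℤ) - 2) / (qint q 4) ^ 2))

lemma Acoef_zero : Acoef q 0 = 0 := by simp [Acoef, qint]

lemma Acoef_one : Acoef q 1 = 0 := by norm_num [Acoef, qint]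

lemma Acoef_eq (hq0 : q ≠ 0) {m : ℕ} (hm : 1 ≤ m) :
    Acoef q m = -(q ^ (2 - 4 * (m : ℤ)) *
      (((q ^ 4) ^ m - 1) * ((q ^ 4) ^ (m - 1) - 1)) /
      ((q - q⁻¹) ^ 2 * (qint q 4) ^ 2)) := by
  have h2 : (2 * (m : ℤ) - 2) = 2 * ((m - 1 : ℕ) : ℤ) := by
    have : ((m - 1 : ℕ) : ℤ) = (m : ℤ) - 1 := by omega
    rw [this]; ring
  have h3 : q ^ (-(2 * (m : ℤ))) * q ^ (-(2 * ((m - 1 : ℕ) : ℤ))) = q ^ (2 - 4 * (m : ℤ)) := by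
    rw [← zpow_add₀ hq0]
    congr 1
    have : ((m - 1 : ℕ) : ℤ) = (m : ℤ) - 1 := by omega
    rw [this]; ring
  rw [Acoef, qint_two_mul hq0 m, h2, qint_two_mul hq0 (m - 1), ← h3]
  field_simp

lemma scalar_id (hq : Transcendental ℚ q) {d j : ℕ} (hj : j + 2 ≤ d) {c0 c2 : K}
    (hrec : c2 * ((1 - (q ^ 4) ^ (j + 1)) * (1 - (q ^ 4) ^ (j + 2))) =
      -c0 * q ^ (4 * j + 2) * ((1 - (q ^ 4) ^ (d - j)) * (1 - (q ^ 4) ^ (d - j - 1)))) :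
    c0 * Acoef q (d - j) +
      c2 * Acoef q (j + 2) * q ^ (-(4 * ((d - (j + 2) : ℕ) : ℤ) + 2)) = 0 := by
  have hq0 : q ≠ 0 := q_ne_zero hq
  set m : ℕ := d - j with hm
  have hm2 : 2 ≤ m := by omega
  have hdj2 : d - (j + 2) = m - 2 := by omega
  rw [hdj2, Acoef_eq hq0 (by omega : 1 ≤ m), Acoef_eq hq0 (by omega : 1 ≤ j + 2)]
  rw [show j + 2 - 1 = j + 1 from rfl]
  -- combine the powers of q appearing in the second term
  have hcomb : q ^ (2 - 4 * ((j + 2 : ℕ) : ℤ)) * q ^ ((4 * j + 2 : ℕ) : ℤ)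
      * q ^ (-(4 * ((m - 2 : ℕ) : ℤ) + 2)) = q ^ (2 - 4 * (m : ℤ)) := by
    rw [← zpow_add₀ hq0, ← zpow_add₀ hq0]
    congr 1
    have : ((m - 2 : ℕ) : ℤ) = (m : ℤ) - 2 := by omega
    rw [this]; push_cast; ring
  have hnat : (q : K) ^ (4 * j + 2) = q ^ ((4 * j + 2 : ℕ) : ℤ) := (zpow_natCast q _).symm
  rw [hnat] at hrec
  have hNj : ((1 : K) - (q ^ 4) ^ (j + 1)) * (1 - (q ^ 4) ^ (j + 2)) ≠ 0 :=
    mul_ne_zero (one_sub_p_pow_ne_zero hq (by omega)) (one_sub_p_pow_ne_zero hq (by omega))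
  have expand : c0 * -(q ^ (2 - 4 * (m : ℤ)) * (((q ^ 4) ^ m - 1) * ((q ^ 4) ^ (m - 1) - 1)) /
        ((q - q⁻¹) ^ 2 * qint q 4 ^ 2)) +
      c2 * -(q ^ (2 - 4 * ((j + 2 : ℕ) : ℤ)) *
          (((q ^ 4) ^ (j + 2) - 1) * ((q ^ 4) ^ (j + 1) - 1)) /
        ((q - q⁻¹) ^ 2 * qint q 4 ^ 2)) * q ^ (-(4 * ((m - 2 : ℕ) : ℤ) + 2)) =
      -((c0 * (q ^ (2 - 4 * (m : ℤ)) * (((q ^ 4) ^ m - 1) * ((q ^ 4) ^ (m - 1) - 1))) +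
          c2 * (q ^ (2 - 4 * ((j + 2 : ℕ) : ℤ)) *
            (((q ^ 4) ^ (j + 2) - 1) * ((q ^ 4) ^ (j + 1) - 1))) *
          q ^ (-(4 * ((m - 2 : ℕ) : ℤ) + 2))) /
        ((q - q⁻¹) ^ 2 * qint q 4 ^ 2)) := by
    ring
  rw [expand, neg_eq_zero, _root_.div_eq_zero_iff]
  left
  refine ((mul_eq_zero.mp ?_).resolve_right hNj : _)
  linear_combination (q ^ (2 - 4 * ((j + 2 : ℕ) : ℤ)) *
      (((q ^ 4) ^ (j + 2) - 1) * ((q ^ 4) ^ (j + 1) - 1)) *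
      q ^ (-(4 * ((m - 2 : ℕ) : ℤ) + 2))) * hrec +
    (-c0 * ((1 - (q ^ 4) ^ m) * (1 - (q ^ 4) ^ (m - 1))) *
      (((q ^ 4) ^ (j + 2) - 1) * ((q ^ 4) ^ (j + 1) - 1))) * hcomb



lemma even_tri (j : ℕ) : ∃ t, j * (j - 1) = t + t := by
  cases j with
  | zero => exact ⟨0, rfl⟩
  | succ k =>
    obtain ⟨t, ht⟩ := Nat.even_mul_succ_self k
    exact ⟨t, by simpa [Nat.mul_comm] using ht⟩

lemma tri_stepP (j : ℕ) : (j + 2) * (j + 2 - 1) / 2 = j * (j - 1) / 2 + (2 * j + 1) := by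
  have h1 : (j + 2) * (j + 2 - 1) = j * (j - 1) + (4 * j + 2) := by
    cases j with
    | zero => rfl
    | succ k => simp [Nat.succ_sub_one]; ring
  obtain ⟨t, ht⟩ := even_tri j
  omega

lemma even_tri' (j : ℕ) : ∃ t, j * (j + 1) = t + t := Nat.even_mul_succ_self j

lemma tri_stepM (j : ℕ) : (j + 2) * (j + 2 + 1) / 2 = j * (j + 1) / 2 + (2 * j + 3) := by
  have h1 : (j + 2) * (j + 2 + 1) = j * (j + 1) + (4 * j + 6) := by ring
  obtain ⟨t, ht⟩ := even_tri' j
  omega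

lemma neg_one_pow_odd_add (e k : ℕ) : (-1 : K) ^ (e + (2 * k + 1)) = -(-1 : K) ^ e := by
  rw [pow_add]
  simp [pow_add, pow_mul]

lemma hrecP (hq : Transcendental ℚ q) {d j : ℕ} (hj : j + 2 ≤ d) :
    ((-1 : K) ^ ((j + 2) * (j + 2 - 1) / 2) * q ^ ((j + 2) * (j + 2 - 1)) *
        qbinom (q ^ 4) d (j + 2)) *
      ((1 - (q ^ 4) ^ (j + 1)) * (1 - (q ^ 4) ^ (j + 2))) =
    -((-1 : K) ^ (j * (j - 1) / 2) * q ^ (j * (j - 1)) * qbinom (q ^ 4) d j) * q ^ (4 * j + 2) *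
      ((1 - (q ^ 4) ^ (d - j)) * (1 - (q ^ 4) ^ (d - j - 1))) := by
  have hs : (-1 : K) ^ ((j + 2) * (j + 2 - 1) / 2) = -(-1 : K) ^ (j * (j - 1) / 2) := by
    rw [tri_stepP, neg_one_pow_odd_add]
  have hp : (q : K) ^ ((j + 2) * (j + 2 - 1)) = q ^ (j * (j - 1)) * q ^ (4 * j + 2) := by
    rw [← pow_add]
    congr 1
    cases j with
    | zero => rfl
    | succ k => simp [Nat.succ_sub_one]; ring
  rw [hs, hp]
  linear_combination (-((-1 : K) ^ (j * (j - 1) / 2) * q ^ (j * (j - 1)) * q ^ (4 * j + 2))) *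
    qbinom_rec hq hj

lemma hrecM (hq : Transcendental ℚ q) {d j : ℕ} (hj : j + 2 ≤ d) :
    ((-1 : K) ^ ((j + 2) * (j + 2 + 1) / 2) * q ^ ((j + 2) * (j + 2 - 1)) *
        qbinom (q ^ 4) d (j + 2)) *
      ((1 - (q ^ 4) ^ (j + 1)) * (1 - (q ^ 4) ^ (j + 2))) =
    -((-1 : K) ^ (j * (j + 1) / 2) * q ^ (j * (j - 1)) * qbinom (q ^ 4) d j) * q ^ (4 * j + 2) *
      ((1 - (q ^ 4) ^ (d - j)) * (1 - (q ^ 4) ^ (d - j - 1))) := by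
  have hs : (-1 : K) ^ ((j + 2) * (j + 2 + 1) / 2) = -(-1 : K) ^ (j * (j + 1) / 2) := by
    rw [tri_stepM, show 2 * j + 3 = 2 * (j + 1) + 1 by ring, neg_one_pow_odd_add]
  have hp : (q : K) ^ ((j + 2) * (j + 2 - 1)) = q ^ (j * (j - 1)) * q ^ (4 * j + 2) := by
    rw [← pow_add]
    congr 1
    cases j with
    | zero => rfl
    | succ k => simp [Nat.succ_sub_one]; ring
  rw [hs, hp]
  linear_combination (-((-1 : K) ^ (j * (j + 1) / 2) * q ^ (j * (j - 1)) * q ^ (4 * j + 2))) *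
    qbinom_rec hq hj


lemma e0W_single (m : ℕ) :
    e0W q 1 (Finsupp.single m (1 : K)) = Acoef q m • Finsupp.single (m - 2) (1 : K) := by
  rw [e0W, opOf_single, one_smul, Acoef]
  rw [Finsupp.smul_single, smul_eq_mul, mul_one]

lemma k0W_single (m : ℕ) :
    k0W q 1 (Finsupp.single m (1 : K)) =
      (q ^ (-(4 * (m : ℤ) + 2))) • Finsupp.single m (1 : K) := by
  rw [k0W, opOf_single, one_smul]
  rw [Finsupp.smul_single, smul_eq_mul, mul_one, one_mul]

lemma De0_tmul (a b : ℕ) :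
    De0 q (Finsupp.single a (1 : K) ⊗ₜ[K] Finsupp.single b (1 : K)) =
      Acoef q b • (Finsupp.single a (1 : K) ⊗ₜ[K] Finsupp.single (b - 2) (1 : K)) +
      (Acoef q a * q ^ (-(4 * (b : ℤ) + 2))) •
        (Finsupp.single (a - 2) (1 : K) ⊗ₜ[K] Finsupp.single b (1 : K)) := by
  rw [De0, LinearMap.add_apply, TensorProduct.map_tmul, TensorProduct.map_tmul,
    LinearMap.id_apply, e0W_single, e0W_single, k0W_single, tmul_smul,
    TensorProduct.smul_tmul_smul]

lemma Dk0_tmul (a b : ℕ) :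
    Dk0 q (Finsupp.single a (1 : K) ⊗ₜ[K] Finsupp.single b (1 : K)) =
      (q ^ (-(4 * (a : ℤ) + 2)) * q ^ (-(4 * (b : ℤ) + 2))) •
        (Finsupp.single a (1 : K) ⊗ₜ[K] Finsupp.single b (1 : K)) := by
  rw [Dk0, TensorProduct.map_tmul, k0W_single, k0W_single,
    TensorProduct.smul_tmul_smul]

lemma Dk0_sum (hq0 : q ≠ 0) (d : ℕ) (c : ℕ → K) :
    Dk0 q (∑ j ∈ range (d + 1),
        c j • (Finsupp.single j (1 : K) ⊗ₜ[K] Finsupp.single (d - j) (1 : K))) =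
      q ^ (-(4 * (d : ℤ) + 4)) • ∑ j ∈ range (d + 1),
        c j • (Finsupp.single j (1 : K) ⊗ₜ[K] Finsupp.single (d - j) (1 : K)) := by
  rw [map_sum, Finset.smul_sum]
  refine Finset.sum_congr rfl fun j hj => ?_
  rw [map_smul, Dk0_tmul, smul_smul, smul_smul]
  congr 1
  have hjd : j ≤ d := by simpa [Nat.lt_succ_iff] using hj
  have hE : q ^ (-(4 * (j : ℤ) + 2)) * q ^ (-(4 * ((d - j : ℕ) : ℤ) + 2))
      = q ^ (-(4 * (d : ℤ) + 4)) := by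
    rw [← zpow_add₀ hq0]
    congr 1
    have : ((d - j : ℕ) : ℤ) = (d : ℤ) - (j : ℤ) := by omega
    rw [this]; ring
  rw [hE, mul_comm]

lemma De0_sum_eq_zero (hq : Transcendental ℚ q) (d : ℕ) (c : ℕ → K)
    (hc0 : ∀ j, d < j → c j = 0)
    (hrec : ∀ j, j + 2 ≤ d → c (j + 2) * ((1 - (q ^ 4) ^ (j + 1)) * (1 - (q ^ 4) ^ (j + 2))) =
      -(c j) * q ^ (4 * j + 2) * ((1 - (q ^ 4) ^ (d - j)) * (1 - (q ^ 4) ^ (d - j - 1)))) :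
    De0 q (∑ j ∈ range (d + 1),
        c j • (Finsupp.single j (1 : K) ⊗ₜ[K] Finsupp.single (d - j) (1 : K))) = 0 := by
  classical
  set F : ℕ → (ℕ →₀ K) ⊗[K] (ℕ →₀ K) := fun j =>
    (c j * (Acoef q j * q ^ (-(4 * ((d - j : ℕ) : ℤ) + 2)))) •
      (Finsupp.single (j - 2) (1 : K) ⊗ₜ[K] Finsupp.single (d - j) (1 : K)) with hF
  set G : ℕ → (ℕ →₀ K) ⊗[K] (ℕ →₀ K) := fun j =>
    (c j * Acoef q (d - j)) •
      (Finsupp.single j (1 : K) ⊗ₜ[K] Finsupp.single (d - j - 2) (1 : K)) with hG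
  rw [map_sum]
  have expand : ∀ j ∈ range (d + 1),
      De0 q (c j • (Finsupp.single j (1 : K) ⊗ₜ[K] Finsupp.single (d - j) (1 : K)))
        = G j + F j := by
    intro j _
    rw [map_smul, De0_tmul, smul_add, smul_smul, smul_smul, hF, hG]
  rw [Finset.sum_congr rfl expand, Finset.sum_add_distrib]
  have hFzero : ∀ j, d < j ∨ j < 2 → F j = 0 := by
    intro j hjd
    rcases hjd with h | h
    · rw [hF]; simp [hc0 j h]
    · interval_cases j
      · simp [hF, Acoef_zero]
      · simp [hF, Acoef_one]
  have hshift : ∑ j ∈ range (d + 1), F j = ∑ j ∈ range (d + 1), F (j + 2) := by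
    have h1 : ∑ j ∈ range (d + 1), F j = ∑ j ∈ range (d + 1 + 2), F j := by
      conv_rhs => rw [Finset.sum_range_succ, Finset.sum_range_succ]
      rw [hFzero (d + 1) (Or.inl (by omega)), hFzero (d + 1 + 1) (Or.inl (by omega))]
      simp
    rw [h1, Finset.sum_range_succ', Finset.sum_range_succ',
      hFzero 0 (Or.inr (by omega)), hFzero 1 (Or.inr (by omega))]
    simp
  rw [hshift, ← Finset.sum_add_distrib]
  refine Finset.sum_eq_zero fun j hj => ?_
  have hjd : j ≤ d := by simpa [Nat.lt_succ_iff] using hj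
  have hidx1 : j + 2 - 2 = j := by omega
  have hidx2 : d - (j + 2) = d - j - 2 := by omega
  rw [hG, hF]
  simp only [hidx1, hidx2]
  rw [← add_smul]
  by_cases hj2 : j + 2 ≤ d
  · have hs := scalar_id hq hj2 (hrec j hj2)
    rw [hidx2] at hs
    rw [show c j * Acoef q (d - j) + c (j + 2) * (Acoef q (j + 2) *
        q ^ (-(4 * ((d - j - 2 : ℕ) : ℤ) + 2))) = 0 from by linear_combination hs, zero_smul]
  · have h1 : c (j + 2) = 0 := hc0 _ (by omega)
    have h2 : Acoef q (d - j) = 0 := by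
      have : d - j = 0 ∨ d - j = 1 := by omega
      rcases this with h | h <;> rw [h]
      · exact Acoef_zero
      · exact Acoef_one
    rw [h1, h2]
    simp

end UvecAux


theorem uvec_highest_weight
    (K : Type) [Field K] [Algebra ℚ K] (q : K) (hq : Transcendental ℚ q) (d : ℕ) :
    Dk0 q (uvecP q d) = q ^ (-(4 * (d : ℤ) + 4)) • uvecP q d ∧
    De0 q (uvecP q d) = 0 ∧
    Dk0 q (uvecM q d) = q ^ (-(4 * (d : ℤ) + 4)) • uvecM q d ∧
    De0 q (uvecM q d) = 0 := by
  have hq0 : q ≠ 0 := UvecAux.q_ne_zero hq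
  refine ⟨?_, ?_, ?_, ?_⟩
  · unfold uvecP
    exact UvecAux.Dk0_sum hq0 d
      (fun j => (-1 : K) ^ (j * (j - 1) / 2) * q ^ (j * (j - 1)) * qbinom (q ^ 4) d j)
  · unfold uvecP
    exact UvecAux.De0_sum_eq_zero hq d
      (fun j => (-1 : K) ^ (j * (j - 1) / 2) * q ^ (j * (j - 1)) * qbinom (q ^ 4) d j)
      (fun j hj => by show _ * qbinom (q ^ 4) d j = 0; rw [qbinom, if_neg (by omega)]; ring)
      (fun j hj => UvecAux.hrecP hq hj)
  · unfold uvecM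
    exact UvecAux.Dk0_sum hq0 d
      (fun j => (-1 : K) ^ (j * (j + 1) / 2) * q ^ (j * (j - 1)) * qbinom (q ^ 4) d j)
  · unfold uvecM
    exact UvecAux.De0_sum_eq_zero hq d
      (fun j => (-1 : K) ^ (j * (j + 1) / 2) * q ^ (j * (j - 1)) * qbinom (q ^ 4) d j)
      (fun j hj => by show _ * qbinom (q ^ 4) d j = 0; rw [qbinom, if_neg (by omega)]; ring)
      (fun j hj => UvecAux.hrecM hq hj)
end
end

section
/- Let K be a commutative ring (e.g. a field), and for μ, ν, z ∈ K let R_{μ,ν}(z) be the endomorphism of K²⊗K² whose matrix in the ordered basis (e_0⊗e_0, e_0⊗e_1, e_1⊗e_0, e_1⊗e_1) is [[z−μν, 0, 0, 0], [0, ν−μz, (1−ν²)z, 0], [0, 1−μ², μ−νz, 0], [0, 0, 0, 1−μνz]] (columns indexed by inputs). Then for all λ, μ, ν, x, y ∈ K the Yang–Baxter equation holds on K²⊗K²⊗K²: (R_{λ,μ}(x))_{12} (R_{λ,ν}(xy))_{13} (R_{μ,ν}(y))_{23} = (R_{μ,ν}(y))_{23} (R_{λ,ν}(xy))_{13} (R_{λ,μ}(x))_{12},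 where the subscripts indicate the pair of tensor factors on which the operator acts nontrivially (acting as the identity on the remaining factor). -/
/- The 4×4 R matrix R_{μ,ν}(z) (free-fermion / U_q(sl(1|1))-type) satisfies the Yang-Baxter
equation R_{λ,μ}(x)₁₂ R_{λ,ν}(xy)₁₃ R_{μ,ν}(y)₂₃ = R_{μ,ν}(y)₂₃ R_{λ,ν}(xy)₁₃ R_{λ,μ}(x)₁₂
on K²⊗K²⊗K² over any commutative ring K. -/

noncomputable section
open TensorProduct

/-- The operator `R_{μ,ν}(z)` on `K²⊗K²`, with matrix
`[[z-μν,0,0,0],[0,ν-μz,(1-ν²)z,0],[0,1-μ²,μ-νz,0],[0,0,0,1-μνz]]`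
in the ordered basis `(e₀⊗e₀, e₀⊗e₁, e₁⊗e₀, e₁⊗e₁)` (columns indexed by inputs). -/
def Rmn {K : Type} [CommRing K] (μ ν z : K) :
    Module.End K ((Fin 2 → K) ⊗[K] (Fin 2 → K)) :=
  ((Pi.basisFun K (Fin 2)).tensorProduct (Pi.basisFun K (Fin 2))).constr K
    (fun p : Fin 2 × Fin 2 =>
      if p = (0, 0) then (z - μ * ν) • ((Pi.single 0 1 : Fin 2 → K) ⊗ₜ[K] (Pi.single 0 1 : Fin 2 → K))
      else if p = (0, 1) then
        (ν - μ * z) • ((Pi.single 0 1 : Fin 2 → K) ⊗ₜ[K] (Pi.single 1 1 : Fin 2 → K)) +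
          (1 - μ ^ 2) • ((Pi.single 1 1 : Fin 2 → K) ⊗ₜ[K] (Pi.single 0 1 : Fin 2 → K))
      else if p = (1, 0) then
        ((1 - ν ^ 2) * z) • ((Pi.single 0 1 : Fin 2 → K) ⊗ₜ[K] (Pi.single 1 1 : Fin 2 → K)) +
          (μ - ν * z) • ((Pi.single 1 1 : Fin 2 → K) ⊗ₜ[K] (Pi.single 0 1 : Fin 2 → K))
      else (1 - μ * ν * z) • ((Pi.single 1 1 : Fin 2 → K) ⊗ₜ[K] (Pi.single 1 1 : Fin 2 → K)))

/-- `A₁₂ = A ⊗ id`, acting on the first two factors of `K²⊗(K²⊗K²)`. -/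
def op12 {K : Type} [CommRing K] (A : Module.End K ((Fin 2 → K) ⊗[K] (Fin 2 → K))) :
    Module.End K ((Fin 2 → K) ⊗[K] ((Fin 2 → K) ⊗[K] (Fin 2 → K))) :=
  (TensorProduct.assoc K (Fin 2 → K) (Fin 2 → K) (Fin 2 → K)).toLinearMap ∘ₗ
    TensorProduct.map A LinearMap.id ∘ₗ
    (TensorProduct.assoc K (Fin 2 → K) (Fin 2 → K) (Fin 2 → K)).symm.toLinearMap

/-- `A₂₃ = id ⊗ A`. -/
def op23 {K : Type} [CommRing K] (A : Module.End K ((Fin 2 → K) ⊗[K] (Fin 2 → K))) :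
    Module.End K ((Fin 2 → K) ⊗[K] ((Fin 2 → K) ⊗[K] (Fin 2 → K))) :=
  TensorProduct.map LinearMap.id A

/-- The flip of the second and third factors. -/
def swap23 {K : Type} [CommRing K] :
    Module.End K ((Fin 2 → K) ⊗[K] ((Fin 2 → K) ⊗[K] (Fin 2 → K))) :=
  TensorProduct.map LinearMap.id (TensorProduct.comm K (Fin 2 → K) (Fin 2 → K)).toLinearMap

/-- `A₁₃`: `A` acting on the first and third factors, identity on the second. -/
def op13 {K : Type} [CommRing K] (A : Module.End K ((Fin 2 → K) ⊗[K] (Fin 2 → K))) :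
    Module.End K ((Fin 2 → K) ⊗[K] ((Fin 2 → K) ⊗[K] (Fin 2 → K))) :=
  swap23 ∘ₗ op12 A ∘ₗ swap23


lemma Rmn_single {K : Type} [CommRing K] (μ ν z : K) (i j : Fin 2) :
    Rmn μ ν z ((Pi.single i 1 : Fin 2 → K) ⊗ₜ[K] (Pi.single j 1 : Fin 2 → K)) =
      (if (i, j) = (0, 0) then (z - μ * ν) • ((Pi.single 0 1 : Fin 2 → K) ⊗ₜ[K] (Pi.single 0 1 : Fin 2 → K))
      else if (i, j) = (0, 1) then
        (ν - μ * z) • ((Pi.single 0 1 : Fin 2 → K) ⊗ₜ[K] (Pi.single 1 1 : Fin 2 → K)) +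
          (1 - μ ^ 2) • ((Pi.single 1 1 : Fin 2 → K) ⊗ₜ[K] (Pi.single 0 1 : Fin 2 → K))
      else if (i, j) = (1, 0) then
        ((1 - ν ^ 2) * z) • ((Pi.single 0 1 : Fin 2 → K) ⊗ₜ[K] (Pi.single 1 1 : Fin 2 → K)) +
          (μ - ν * z) • ((Pi.single 1 1 : Fin 2 → K) ⊗ₜ[K] (Pi.single 0 1 : Fin 2 → K))
      else (1 - μ * ν * z) • ((Pi.single 1 1 : Fin 2 → K) ⊗ₜ[K] (Pi.single 1 1 : Fin 2 → K))) := by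
  rw [show (Pi.single i 1 : Fin 2 → K) ⊗ₜ[K] (Pi.single j 1 : Fin 2 → K)
      = ((Pi.basisFun K (Fin 2)).tensorProduct (Pi.basisFun K (Fin 2))) (i, j) from by
    simp [Module.Basis.tensorProduct_apply]]
  exact Module.Basis.constr_basis _ _ _ _

set_option maxHeartbeats 2000000 in
set_option synthInstance.maxHeartbeats 200000 in
theorem Rmn_yang_baxter {K : Type} [CommRing K] (lam μ ν x y : K) :
    op12 (Rmn lam μ x) * op13 (Rmn lam ν (x * y)) * op23 (Rmn μ ν y) =
      op23 (Rmn μ ν y) * op13 (Rmn lam ν (x * y)) * op12 (Rmn lam μ x) := by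
  apply ((Pi.basisFun K (Fin 2)).tensorProduct
    ((Pi.basisFun K (Fin 2)).tensorProduct (Pi.basisFun K (Fin 2)))).ext
  rintro ⟨i, j, k⟩
  fin_cases i <;> fin_cases j <;> fin_cases k <;>
    simp only [Module.Basis.tensorProduct_apply, Pi.basisFun_apply, Module.End.mul_apply,
      op12, op13, op23, swap23, LinearMap.comp_apply, LinearEquiv.coe_coe,
      TensorProduct.map_tmul, LinearMap.id_apply, TensorProduct.assoc_tmul,
      TensorProduct.assoc_symm_tmul, TensorProduct.comm_tmul, Rmn_single,
      Fin.isValue, Fin.zero_eta, Fin.mk_one, Prod.mk.injEq, if_true, if_false, one_ne_zero, zero_ne_one,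
      and_true, and_false, true_and, false_and, ite_true, ite_false,
      map_add, map_smul, tmul_add, add_tmul, tmul_smul, ← smul_tmul', smul_smul] <;>
    module
end
end
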